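/- arXiv:0805.0154 — 2 statements merged into one kernel-verified Lean document; each statement's English description precedes it below -/
import Mathlib

section
/- Let A be an infinite recursively enumerable subset of {0,1}*, and f : ℕ⁺ → ℕ a total recursive function with f(n) → ∞ such that f(l)2^{-l} is nonincreasing in l for all l ≥ l₀ for some l₀. Then ∑_{s ∈ A} f(K(s)) 2^{-K(s)} diverges to infinity, where K is the prefix-free Kolmogorov complexity. -/
open Filter Topology

namespace Paper

/-- Finite binary strings. -/
abbrev Str := List Bool

/-- A computer: a partial recursive function on binary strings with prefix-free domain. -/
structure Computer where
  f : Str →. Str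
  partrec : Partrec f
  prefixFree : ∀ p q : Str, (f p).Dom → (f q).Dom → p <+: q → p = q

/-- An optimal computer (universal self-delimiting Turing machine). -/
structure OptimalComputer extends Computer where
  optimal : ∀ C : Computer, ∃ sim : ℕ, ∀ p s, s ∈ C.f p →
    ∃ p', s ∈ toComputer.f p' ∧ p'.length ≤ p.length + sim

/-- Prefix-free Kolmogorov complexity (program-size complexity) w.r.t. `U`. -/
noncomputable def Kc (U : OptimalComputer) (s : Str) : ℕ :=
  sInf {n | ∃ p : Str, p.length = n ∧ s ∈ U.f p}

/-- A semi-measure on binary strings: values in [0,1] with all finite partial sums ≤ 1. -/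
def SemiMeasure (r : Str → ℝ) : Prop :=
  (∀ s, 0 ≤ r s ∧ r s ≤ 1) ∧ ∀ F : Finset Str, ∑ s ∈ F, r s ≤ 1

/-- Lower-computability: approximability from below by a total recursive rational function. -/
def LowerComputable (r : Str → ℝ) : Prop :=
  ∃ f : ℕ → Str → ℚ, Computable₂ f ∧
    ∀ s : Str, (∀ n : ℕ, 0 ≤ f n s ∧ (f n s : ℝ) ≤ r s) ∧
      Tendsto (fun n => (f n s : ℝ)) atTop (nhds (r s))

/-- A lower-computable semi-measure. -/
def LCSemiMeasure (r : Str → ℝ) : Prop := SemiMeasure r ∧ LowerComputable r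

/-- A universal probability: a lower-computable semi-measure dominating all
lower-computable semi-measures up to a positive multiplicative constant. -/
def UniversalProb (m : Str → ℝ) : Prop :=
  LCSemiMeasure m ∧ ∀ r : Str → ℝ, LCSemiMeasure r → ∃ c : ℝ, 0 < c ∧ ∀ s, c * r s ≤ m s

/-- The first `n` bits of the base-two expansion of `T mod 1`
(the expansion with infinitely many zeros). -/
noncomputable def binPrefix (T : ℝ) (n : ℕ) : Str :=
  (List.range n).map (fun i => decide (⌊Int.fract T * 2 ^ (i + 1)⌋ % 2 = 1))

/-- A real is right-computable if it is the limit from above of a recursive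
sequence of rationals. -/
def RightComputableReal (T : ℝ) : Prop :=
  ∃ g : ℕ → ℚ, Computable g ∧ (∀ n, T ≤ (g n : ℝ)) ∧
    Tendsto (fun n => (g n : ℝ)) atTop (nhds T)

/-- A real is left-computable if its negation is right-computable. -/
def LeftComputableReal (T : ℝ) : Prop := RightComputableReal (-T)

/-- A computable real number. -/
def ComputableReal (T : ℝ) : Prop :=
  ∃ f : ℕ → ℚ, Computable f ∧ ∀ n : ℕ, |T - (f n : ℝ)| < (2 : ℝ)⁻¹ ^ n

/-- A recursively enumerable set of binary strings. -/
def REset (A : Set Str) : Prop :=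
  ∃ g : Str →. Unit, Partrec g ∧ ∀ s, (g s).Dom ↔ s ∈ A

/-- `T` is weakly Chaitin `D`-random. -/
noncomputable def WeaklyChaitinDRandom (U : OptimalComputer) (D T : ℝ) : Prop :=
  ∃ c : ℕ, ∀ n : ℕ, D * n - c ≤ Kc U (binPrefix T n)

/-- `T` is `D`-compressible. -/
noncomputable def DCompressible (U : OptimalComputer) (D T : ℝ) : Prop :=
  Filter.atTop.limsup (fun n : ℕ => (Kc U (binPrefix T n) : ℝ) / n) ≤ D



open Encodable

lemma computable_nat_find {α} [Primcodable α] {q : α → ℕ → Prop} [∀ a n, Decidable (q a n)]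
    (hp : Computable₂ fun a n => decide (q a n)) (H : ∀ a, ∃ n, q a n) :
    Computable fun a => Nat.find (H a) := by
  have h1 : Partrec fun a => Nat.rfind (fun n => Part.some (decide (q a n))) :=
    Partrec.rfind hp.partrec₂
  exact h1.of_eq_tot fun a => Nat.mem_rfind.2
    ⟨by simpa using Nat.find_spec (H a),
     fun {m} hm => by simpa using Nat.find_min (H a) hm⟩

/-- injective encoding of strings into ℕ with `2^len ≤ strVal < 2^(len+1)`. -/
def strVal : Str → ℕ
  | [] => 1
  | b :: r => 2 * strVal r + cond b 1 0

lemma strVal_lt (l : Str) : strVal l < 2 ^ (l.length + 1) := by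
  induction l with
  | nil => simp [strVal]
  | cons b r ih =>
      simp only [strVal, List.length_cons]
      have : cond b 1 0 ≤ 1 := by cases b <;> simp
      calc 2 * strVal r + cond b 1 0 < 2 * (2 ^ (r.length + 1)) := by omega
        _ = 2 ^ (r.length + 1 + 1) := by ring

lemma strVal_ge (l : Str) : 2 ^ l.length ≤ strVal l := by
  induction l with
  | nil => simp [strVal]
  | cons b r ih =>
      simp only [strVal, List.length_cons]
      have : 2 ^ (r.length + 1) = 2 * 2 ^ r.length := by ring
      omega

lemma strVal_inj : Function.Injective strVal := by
  intro l₁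
  induction l₁ with
  | nil =>
      intro l₂ h
      cases l₂ with
      | nil => rfl
      | cons b r =>
          exfalso
          have h1 := strVal_ge (b :: r)
          simp only [strVal, List.length_cons] at h h1
          have : (2:ℕ) ^ (r.length + 1) ≥ 2 := Nat.one_lt_two_pow (by omega)
          omega
  | cons b r ih =>
      intro l₂ h
      cases l₂ with
      | nil =>
          exfalso
          have h1 := strVal_ge (b :: r)
          simp only [strVal, List.length_cons] at h h1
          have : (2:ℕ) ^ (r.length + 1) ≥ 2 := Nat.one_lt_two_pow (by omega)
          omega
      | cons b' r' =>
          simp only [strVal] at h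
          have e1 : cond b 1 0 ≤ 1 := by cases b <;> simp
          have e2 : cond b' 1 0 ≤ 1 := by cases b' <;> simp
          have hb : cond b 1 0 = cond b' 1 0 := by omega
          have hr : strVal r = strVal r' := by omega
          have : b = b' := by cases b <;> cases b' <;> simp_all
          rw [this, ih hr]

/-- binary string of length m for n. -/
def natToStr : ℕ → ℕ → Str
  | 0, _ => []
  | m + 1, n => (decide (n % 2 = 1)) :: natToStr m (n / 2)

lemma natToStr_length (m n : ℕ) : (natToStr m n).length = m := by
  induction m generalizing n with
  | zero => rfl
  | succ m ih => simp [natToStr, ih]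

lemma natToStr_inj (m : ℕ) : ∀ n n', n < 2 ^ m → n' < 2 ^ m →
    natToStr m n = natToStr m n' → n = n' := by
  induction m with
  | zero => intro n n' h h' _; omega
  | succ m ih =>
      intro n n' h h' heq
      simp only [natToStr, List.cons.injEq] at heq
      have h2 : n / 2 = n' / 2 := by
        apply ih _ _ _ _ heq.2 <;> · rw [pow_succ] at *; omega
      have h1 : n % 2 = n' % 2 := by
        have := heq.1
        rcases Nat.mod_two_eq_zero_or_one n with h3 | h3 <;>
          rcases Nat.mod_two_eq_zero_or_one n' with h4 | h4 <;> simp_all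
      omega

/-- iterated tail = drop. -/
def dropN : ℕ → Str → Str := fun k l => Nat.rec l (fun _ acc => acc.tail) k

lemma dropN_eq (k : ℕ) (l : Str) : dropN k l = l.drop k := by
  induction k with
  | zero => rfl
  | succ k ih => show (dropN k l).tail = _; rw [ih, List.tail_drop]

lemma computable_dropN : Computable₂ dropN := by
  have := Computable.nat_rec (f := fun p : ℕ × Str => p.1) (g := fun p : ℕ × Str => p.2)
    (h := fun (_ : ℕ × Str) (q : ℕ × Str) => q.2.tail)
    Computable.fst Computable.snd
    (Primrec.list_tail.to_comp.comp (Computable.snd.comp Computable.snd)).to₂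
  exact this.to₂

/-- Bool-valued non-membership test. -/
def notMem (s : Str) (l : List Str) : Bool :=
  decide (@List.idxOf Str instBEqOfDecidableEq s l = l.length)

lemma notMem_iff {s : Str} {l : List Str} : notMem s l = true ↔ s ∉ l := by
  rw [notMem, decide_eq_true_iff]
  letI : BEq Str := instBEqOfDecidableEq
  exact List.idxOf_eq_length_iff

lemma primrec_notMem : Primrec₂ notMem :=
  Primrec.eq.decide.comp (Primrec.list_idxOf.comp Primrec.fst Primrec.snd)
    (Primrec.list_length.comp Primrec.snd)

section Enum
variable (HB : Str → ℕ → Bool)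

/-- stage-by-stage duplicate-free enumeration of `{s | ∃ t, HB s t}`. -/
def DList : ℕ → List Str :=
  fun n => Nat.rec [] (fun k l =>
    Option.casesOn (decode (α := Str) (Nat.unpair k).1) l
      (fun s => cond (HB s (Nat.unpair k).2 && notMem s l) (l ++ [s]) l)) n

lemma DList_succ (k : ℕ) : DList HB (k+1) =
    Option.casesOn (decode (α := Str) (Nat.unpair k).1) (DList HB k)
      (fun s => cond (HB s (Nat.unpair k).2 && notMem s (DList HB k))
        (DList HB k ++ [s]) (DList HB k)) := rfl

lemma DList_prefix_succ (k : ℕ) : DList HB k <+: DList HB (k+1) := by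
  rw [DList_succ]
  rcases h : decode (α := Str) (Nat.unpair k).1 with _ | s
  · simp
  · simp only
    rcases hb : (HB s (Nat.unpair k).2 && notMem s (DList HB k)) with _ | _
    · simp
    · simp

lemma DList_prefix {n m : ℕ} (h : n ≤ m) : DList HB n <+: DList HB m := by
  induction m with
  | zero => simp [Nat.le_zero.1 h]
  | succ m ih =>
      rcases Nat.lt_or_ge n (m+1) with h' | h'
      · exact (ih (by omega)).trans (DList_prefix_succ HB m)
      · have : n = m + 1 := by omega
        simp [this]

lemma DList_nodup (n : ℕ) : (DList HB n).Nodup := by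
  induction n with
  | zero => simp [DList]
  | succ k ih =>
      rw [DList_succ]
      rcases h : decode (α := Str) (Nat.unpair k).1 with _ | s
      · exact ih
      · simp only
        rcases hb : (HB s (Nat.unpair k).2 && notMem s (DList HB k)) with _ | _
        · exact ih
        · simp only [cond_true]
          have : s ∉ DList HB k := by
            rw [Bool.and_eq_true] at hb
            exact notMem_iff.1 hb.2
          simp [List.nodup_append, ih, this]
          rintro a ha rfl; exact this ha

lemma DList_mem_halts {n : ℕ} {s : Str} (h : s ∈ DList HB n) : ∃ t, HB s t = true := by
  induction n with
  | zero => simp [DList] at h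
  | succ k ih =>
      rw [DList_succ] at h
      rcases hd : decode (α := Str) (Nat.unpair k).1 with _ | s'
      · rw [hd] at h; exact ih h
      · rw [hd] at h
        simp only at h
        rcases hb : (HB s' (Nat.unpair k).2 && notMem s' (DList HB k)) with _ | _
        · rw [hb] at h; exact ih h
        · rw [hb] at h
          simp only [cond_true, List.mem_append, List.mem_singleton] at h
          rcases h with h | rfl
          · exact ih h
          · rw [Bool.and_eq_true] at hb
            exact ⟨(Nat.unpair k).2, hb.1⟩

lemma DList_complete {s : Str} {t : ℕ} (h : HB s t = true) :
    s ∈ DList HB (Nat.pair (encode s) t + 1) := by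
  set k := Nat.pair (encode s) t
  rw [DList_succ]
  have hd : decode (α := Str) (Nat.unpair k).1 = some s := by
    simp [k, Nat.unpair_pair, encodek]
  rw [hd]
  have ht : (Nat.unpair k).2 = t := by simp [k, Nat.unpair_pair]
  show s ∈ cond (HB s (Nat.unpair k).2 && notMem s (DList HB k))
      (DList HB k ++ [s]) (DList HB k)
  by_cases hm : s ∈ DList HB k
  · have hb : notMem s (DList HB k) = false := by
      rw [← Bool.not_eq_true, notMem_iff]; simp [hm]
    rw [ht, h, hb]; simpa using hm
  · have hb : notMem s (DList HB k) = true := notMem_iff.2 hm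
    rw [ht, h, hb]; simp

set_option maxHeartbeats 2000000 in
lemma computable_DList (hHB : Computable₂ HB) : Computable (DList HB) := by
  have hstep : Computable₂ (fun (k : ℕ) (l : List Str) =>
      Option.casesOn (decode (α := Str) (Nat.unpair k).1) l
        (fun s => cond (HB s (Nat.unpair k).2 && notMem s l) (l ++ [s]) l) :
        ℕ → List Str → List Str) := by
    apply Computable.option_casesOn
      (o := fun p : ℕ × List Str => decode (α := Str) (Nat.unpair p.1).1)
      (f := fun p : ℕ × List Str => p.2)
    · exact Computable.decode.comp ((Computable.fst.comp Computable.unpair).comp Computable.fst)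
    · exact Computable.snd
    · apply Computable.cond
      · exact (Primrec.dom_bool₂ (· && ·)).to_comp.comp
          (hHB.comp Computable.snd
            ((Computable.snd.comp Computable.unpair).comp (Computable.fst.comp Computable.fst)))
          (primrec_notMem.to_comp.comp Computable.snd (Computable.snd.comp Computable.fst))
      · exact Primrec.list_concat.to_comp.comp
          (Computable.snd.comp Computable.fst) Computable.snd
      · exact Computable.snd.comp Computable.fst
  have h2 := Computable.nat_rec (f := fun n : ℕ => n) (g := fun _ : ℕ => ([] : List Str))
    (h := fun (_ : ℕ) (q : ℕ × List Str) =>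
      Option.casesOn (decode (α := Str) (Nat.unpair q.1).1) q.2
        (fun s => cond (HB s (Nat.unpair q.1).2 && notMem s q.2) (q.2 ++ [s]) q.2))
    Computable.id (Computable.const _) ((hstep.comp (Computable.fst.comp Computable.snd)
      (Computable.snd.comp Computable.snd)).to₂)
  exact h2.of_eq fun n => rfl


variable (hunb : ∀ idx : ℕ, ∃ n, idx < (DList HB n).length)

/-- the `idx`-th element of the enumeration. -/
def nthA (idx : ℕ) : Str :=
  (DList HB (Nat.find (hunb idx)))[idx]?.getD []

lemma nthA_eq {idx n : ℕ} (h : idx < (DList HB n).length) :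
    some (nthA HB hunb idx) = (DList HB n)[idx]? := by
  have h0 := Nat.find_spec (hunb idx)
  set n0 := Nat.find (hunb idx)
  have key : ∀ {a b : ℕ}, a ≤ b → idx < (DList HB a).length →
      (DList HB a)[idx]? = (DList HB b)[idx]? := by
    intro a b hab ha
    obtain ⟨t, ht⟩ := DList_prefix HB hab
    rw [← ht]
    rw [List.getElem?_append_left ha]
  rcases Nat.le_total n0 n with hc | hc
  · rw [nthA, ← key hc h0]
    show some ((DList HB n0)[idx]?.getD []) = (DList HB n0)[idx]?
    simp [List.getElem?_eq_getElem h0]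
  · rw [nthA, ← key hc h]
    simp [List.getElem?_eq_getElem h]

lemma nthA_mem (idx : ℕ) : ∃ t, HB (nthA HB hunb idx) t = true := by
  have h0 := Nat.find_spec (hunb idx)
  have := nthA_eq HB hunb h0
  have hm : nthA HB hunb idx ∈ DList HB (Nat.find (hunb idx)) :=
    List.mem_of_getElem? this.symm
  exact DList_mem_halts HB hm

lemma nthA_inj : Function.Injective (nthA HB hunb) := by
  intro i j hij
  by_contra hne
  set n := max (Nat.find (hunb i)) (Nat.find (hunb j))
  have hi : i < (DList HB n).length :=
    lt_of_lt_of_le (Nat.find_spec (hunb i))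
      ((DList_prefix HB (le_max_left _ _)).length_le)
  have hj : j < (DList HB n).length :=
    lt_of_lt_of_le (Nat.find_spec (hunb j))
      ((DList_prefix HB (le_max_right _ _)).length_le)
  have e1 := nthA_eq HB hunb hi
  have e2 := nthA_eq HB hunb hj
  rw [hij] at e1
  have : (DList HB n)[i]? = (DList HB n)[j]? := by rw [← e1, ← e2]
  exact hne ((List.getElem?_inj hi (DList_nodup HB n)).1 this)

lemma computable_nthA (hHB : Computable₂ HB) : Computable (nthA HB hunb) := by
  have hfind : Computable fun idx =>
      Nat.find (hunb idx) := by
    apply computable_nat_find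
      (q := fun (idx : ℕ) (n : ℕ) => idx < (DList HB n).length)
    exact Primrec.nat_lt.decide.to_comp.comp Computable.fst
      (Primrec.list_length.to_comp.comp ((computable_DList HB hHB).comp Computable.snd))
  apply Computable.option_getD
  · exact Computable.list_getElem?.comp ((computable_DList HB hHB).comp hfind) Computable.id
  · exact Computable.const []

end Enum

section Win
variable (f : ℕ → ℕ) (l₀ : ℕ)

/-- min of `f` on the window `[m, m+(2u+2)]`. -/
def wmin (u m : ℕ) : ℕ := Nat.rec (f m) (fun i acc => min acc (f (m+i+1))) (2*u+2)

lemma wmin_le {u m : ℕ} {i : ℕ} (h : i ≤ 2*u+2) : wmin f u m ≤ f (m + i) := by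
  suffices H : ∀ k, ∀ i ≤ k, (Nat.rec (f m) (fun i acc => min acc (f (m+i+1))) k : ℕ) ≤ f (m+i) from
    H _ i h
  intro k
  induction k with
  | zero => intro i hi; simp [Nat.le_zero.1 hi]
  | succ k ih =>
      intro i hi
      rcases Nat.lt_or_ge i (k+1) with h' | h'
      · exact le_trans (min_le_left _ _) (ih i (by omega))
      · have : i = k + 1 := by omega
        subst this
        exact le_trans (min_le_right _ _) (by rw [← Nat.add_assoc])

lemma le_wmin {u m b : ℕ} (h : ∀ i ≤ 2*u+2, b ≤ f (m+i)) : b ≤ wmin f u m := by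
  suffices H : ∀ k, (∀ i ≤ k, b ≤ f (m+i)) →
      b ≤ (Nat.rec (f m) (fun i acc => min acc (f (m+i+1))) k : ℕ) from H _ h
  intro k
  induction k with
  | zero => intro h'; simpa using h' 0 (le_refl 0)
  | succ k ih =>
      intro h'
      refine le_min (ih fun i hi => h' i (by omega)) ?_
      rw [Nat.add_assoc]
      exact h' (k+1) (le_refl _)

lemma computable_wmin (hf : Computable f) : Computable₂ (wmin f) := by
  have := Computable.nat_rec (f := fun a : ℕ × ℕ => 2*a.1+2) (g := fun a : ℕ × ℕ => f a.2)
    (h := fun (a : ℕ × ℕ) (q : ℕ × ℕ) => min q.2 (f (a.2 + q.1 + 1)))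
    (Primrec.nat_add.to_comp.comp
      (Primrec.nat_mul.to_comp.comp (Computable.const 2) Computable.fst) (Computable.const 2))
    (hf.comp Computable.snd)
    ((Primrec.nat_min.to_comp.comp (Computable.snd.comp Computable.snd)
      (hf.comp (Primrec.nat_add.to_comp.comp
        (Primrec.nat_add.to_comp.comp (Computable.snd.comp Computable.fst)
          (Computable.fst.comp Computable.snd)) (Computable.const 1)))).to₂)
  exact this.to₂

/-- window condition. -/
def winP (u m : ℕ) : Prop := l₀ + 2 ≤ m ∧ 8^u ≤ wmin f u m

instance (u m : ℕ) : Decidable (winP f l₀ u m) := by unfold winP; infer_instance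

lemma winP_exists (hlim : Tendsto f atTop atTop) (u : ℕ) : ∃ m, winP f l₀ u m := by
  obtain ⟨N, hN⟩ := (hlim.eventually_ge_atTop (8^u)).exists_forall_of_atTop
  refine ⟨max N (l₀+2), le_max_right _ _, le_wmin f fun i _ => hN _ ?_⟩
  calc N ≤ max N (l₀+2) := le_max_left _ _
    _ ≤ max N (l₀+2) + i := Nat.le_add_right _ _

/-- 8^u computably. -/
def pow8 (u : ℕ) : ℕ := Nat.rec 1 (fun _ acc => 8*acc) u

lemma pow8_eq (u : ℕ) : pow8 u = 8^u := by
  induction u with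
  | zero => rfl
  | succ u ih => show 8 * pow8 u = _; rw [ih, pow_succ]; ring

lemma computable_pow8 : Computable pow8 := by
  have := Computable.nat_rec (f := fun a : ℕ => a) (g := fun _ : ℕ => 1)
    (h := fun (_ : ℕ) (q : ℕ × ℕ) => 8 * q.2)
    Computable.id (Computable.const 1)
    ((Primrec.nat_mul.to_comp.comp (Computable.const 8)
      (Computable.snd.comp Computable.snd)).to₂)
  exact this.of_eq fun n => rfl

lemma computable_winP (hf : Computable f) :
    Computable₂ fun u m => decide (winP f l₀ u m) := by
  have h1 : Computable fun a : ℕ × ℕ =>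
      (decide (l₀ + 2 ≤ a.2) && decide (8^a.1 ≤ wmin f a.1 a.2)) :=
    (Primrec.dom_bool₂ (· && ·)).to_comp.comp
      (Primrec.nat_le.decide.to_comp.comp (Computable.const (l₀+2)) Computable.snd)
      (Primrec.nat_le.decide.to_comp.comp
        ((computable_pow8.comp Computable.fst).of_eq fun a => (pow8_eq a.1))
        ((computable_wmin f hf).comp Computable.fst Computable.snd))
  have h2 : Computable fun a : ℕ × ℕ => decide (winP f l₀ a.1 a.2) :=
    h1.of_eq fun a => by rw [← Bool.decide_and]; exact decide_eq_decide.2 Iff.rfl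
  exact h2.to₂

def mfun (hex : ∀ u, ∃ m, winP f l₀ u m) : ℕ → ℕ := fun u => Nat.find (hex u)

lemma mfun_ge (hex) (u : ℕ) : l₀ + 2 ≤ mfun f l₀ hex u := (Nat.find_spec (hex u)).1

lemma mfun_win (hex) (u : ℕ) {i : ℕ} (hi : i ≤ 2*u+2) :
    8^u ≤ f (mfun f l₀ hex u + i) :=
  le_trans (Nat.find_spec (hex u)).2 (wmin_le f hi)

lemma computable_mfun (hf : Computable f) (hex) : Computable (mfun f l₀ hex) :=
  computable_nat_find (computable_winP f l₀ hf) hex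

end Win

section Machine
variable (mf : ℕ → ℕ) (en : ℕ → Str)

/-- first occurrence of `false`. -/
def idxF (x : Str) : ℕ := @List.idxOf Bool instBEqOfDecidableEq false x

lemma primrec_idxF : Primrec idxF :=
  Primrec.list_idxOf.comp (Primrec.const false) Primrec.id

/-- The machine: on `1^u 0 q` with `q.length = mf u`, output `en (encode q)`. -/
def CfO (x : Str) : Option Str :=
  cond (decide (idxF x < x.length) && decide (x.length = idxF x + 1 + mf (idxF x)))
    (some (en (encode (dropN (idxF x + 1) x)))) none

lemma computable_CfO (hmf : Computable mf) (hen : Computable en) :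
    Computable (CfO mf en) := by
  apply Computable.cond
  · exact (Primrec.dom_bool₂ (· && ·)).to_comp.comp
      (Primrec.nat_lt.decide.to_comp.comp (primrec_idxF.to_comp) Primrec.list_length.to_comp)
      (Primrec.eq.decide.to_comp.comp Primrec.list_length.to_comp
        (Primrec.nat_add.to_comp.comp
          (Primrec.nat_add.to_comp.comp primrec_idxF.to_comp (Computable.const 1))
          (hmf.comp primrec_idxF.to_comp)))
  · exact Computable.option_some.comp (hen.comp (Computable.encode.comp
      (computable_dropN.comp
        (Primrec.nat_add.to_comp.comp primrec_idxF.to_comp (Computable.const 1))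
        Computable.id)))
  · exact Computable.const none

/-- Domain characterization. -/
def GoodInp (x : Str) : Prop := idxF x < x.length ∧ x.length = idxF x + 1 + mf (idxF x)

lemma CfO_eq_some {x : Str} (h : GoodInp mf x) :
    CfO mf en x = some (en (encode (x.drop (idxF x + 1)))) := by
  rw [CfO, dropN_eq]
  have h1 : decide (idxF x < x.length) = true := decide_eq_true h.1
  have h2 : decide (x.length = idxF x + 1 + mf (idxF x)) = true := decide_eq_true h.2
  rw [h1, h2]
  rfl

lemma CfO_isSome_iff {x : Str} : (CfO mf en x).isSome = true ↔ GoodInp mf x := by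
  constructor
  · intro h
    by_contra hg
    have : ¬ (decide (idxF x < x.length) && decide (x.length = idxF x + 1 + mf (idxF x))) = true := by
      rw [Bool.and_eq_true, decide_eq_true_iff, decide_eq_true_iff]
      intro hc; exact hg ⟨hc.1, hc.2⟩
    rcases hb : (decide (idxF x < x.length) && decide (x.length = idxF x + 1 + mf (idxF x))) with _ | _
    · rw [CfO, hb] at h; simp at h
    · exact absurd hb this
  · intro h; rw [CfO_eq_some mf en h]; rfl

lemma GoodInp_prefix {x y : Str} (hx : GoodInp mf x) (hy : GoodInp mf y) (hp : x <+: y) :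
    x = y := by
  obtain ⟨t, rfl⟩ := hp
  have hfm : false ∈ x := List.idxOf_lt_length_iff.1 hx.1
  have hidx : idxF (x ++ t) = idxF x := List.idxOf_append_of_mem hfm
  have hlen : (x ++ t).length = x.length := by
    rw [hy.2, hidx, ← hx.2]
  have : t = [] := by
    rw [List.length_append] at hlen
    exact List.eq_nil_of_length_eq_zero (by omega)
  rw [this, List.append_nil]

/-- the program for block `u`, payload `q`. -/
def prog (u : ℕ) (q : Str) : Str := List.replicate u true ++ false :: q

lemma idxF_prog (u : ℕ) (q : Str) : idxF (prog u q) = u := by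
  rw [prog, idxF, List.idxOf_append_of_notMem (by simp [List.mem_replicate])]
  simp [List.idxOf_cons_self]

lemma prog_length (u : ℕ) (q : Str) : (prog u q).length = u + 1 + q.length := by
  simp [prog]; omega

lemma prog_drop (u : ℕ) (q : Str) : (prog u q).drop (u + 1) = q := by
  have : prog u q = (List.replicate u true ++ [false]) ++ q := by simp [prog]
  rw [this]
  have hl : (List.replicate u true ++ [false]).length = u + 1 := by simp
  rw [← hl, List.drop_left]

lemma CfO_prog {u : ℕ} {q : Str} (h : q.length = mf u) :
    CfO mf en (prog u q) = some (en (encode q)) := by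
  have hg : GoodInp mf (prog u q) := by
    constructor
    · rw [idxF_prog, prog_length]; omega
    · rw [idxF_prog, prog_length, h]
  rw [CfO_eq_some mf en hg, idxF_prog, prog_drop]

/-- The machine as a `Computer`. -/
def machine (hmf : Computable mf) (hen : Computable en) : Computer where
  f := fun x => Part.ofOption (CfO mf en x)
  partrec := Computable.ofOption (computable_CfO mf en hmf hen)
  prefixFree := by
    intro p q hp hq hpre
    exact GoodInp_prefix mf
      ((CfO_isSome_iff mf en).1 ((Part.ofOption_dom _).1 hp))
      ((CfO_isSome_iff mf en).1 ((Part.ofOption_dom _).1 hq)) hpre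

lemma machine_mem {hmf : Computable mf} {hen : Computable en} {u : ℕ} {q : Str}
    (h : q.length = mf u) :
    en (encode q) ∈ (machine mf en hmf hen).f (prog u q) := by
  rw [machine]
  simp only [Part.mem_ofOption]
  rw [CfO_prog mf en h]
  rfl

end Machine

/-- For an infinite r.e. set `A` and total recursive `f` with `f n → ∞` such that
`f l * 2^(-l)` is nonincreasing for `l ≥ l₀`, the sum `∑_{s ∈ A} f (K s) 2^(-K s)`
diverges to infinity. -/
theorem sum_fK_two_pow_neg_K_diverges (U : OptimalComputer) (A : Set Str)
    (hA : A.Infinite) (hre : REset A)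
    (f : ℕ → ℕ) (hf : Computable f) (hlim : Tendsto f atTop atTop)
    (l₀ : ℕ) (hmono : ∀ l l' : ℕ, l₀ ≤ l → l ≤ l' →
      (f l' : ℝ) * 2 ^ (-(l' : ℤ)) ≤ (f l : ℝ) * 2 ^ (-(l : ℤ))) :
    ∀ B : ℝ, ∃ F : Finset Str,
      B ≤ ∑ s ∈ F, A.indicator
        (fun s => (f (Kc U s) : ℝ) * 2 ^ (-(Kc U s : ℤ))) s := by
  classical
  -- Step 1: a computable halting-time test for membership in A
  obtain ⟨g, hgp, hgdom⟩ := hre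
  have hnp : Nat.Partrec fun n =>
      Part.bind (Encodable.decode (α := Str) n) fun a => ((g a).map Encodable.encode) := hgp
  obtain ⟨c, hc⟩ := Nat.Partrec.Code.exists_code.1 hnp
  set HB : Str → ℕ → Bool :=
    fun s t => (Nat.Partrec.Code.evaln t c (Encodable.encode s)).isSome with hHBdef
  have hHBspec : ∀ s : Str, s ∈ A ↔ ∃ t, HB s t = true := by
    intro s
    rw [← hgdom s]
    have h1 : Nat.Partrec.Code.eval c (Encodable.encode s) = (g s).map Encodable.encode := by
      rw [hc]
      simp [Encodable.encodek]
    constructor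
    · intro hd
      have hd2 : (Nat.Partrec.Code.eval c (Encodable.encode s)).Dom := by
        rw [h1]; exact hd
      obtain ⟨x, hx⟩ := Part.dom_iff_mem.1 hd2
      obtain ⟨k, hk⟩ := Nat.Partrec.Code.evaln_complete.1 hx
      refine ⟨k, ?_⟩
      simp only [hHBdef, Option.isSome_iff_exists]
      exact ⟨x, hk⟩
    · rintro ⟨t, ht⟩
      simp only [hHBdef, Option.isSome_iff_exists] at ht
      obtain ⟨x, hx⟩ := ht
      have : x ∈ Nat.Partrec.Code.eval c (Encodable.encode s) :=
        Nat.Partrec.Code.evaln_complete.2 ⟨t, hx⟩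
      rw [h1] at this
      obtain ⟨y, hy, _⟩ := (Part.mem_map_iff _).1 this
      exact Part.dom_iff_mem.2 ⟨y, hy⟩
  have hHBcomp : Computable₂ HB := by
    have h1 : Primrec fun p : Str × ℕ =>
        (Nat.Partrec.Code.evaln p.2 c (Encodable.encode p.1)).isSome :=
      Primrec.option_isSome.comp
        (Nat.Partrec.Code.primrec_evaln.comp
          (((Primrec.snd).pair (Primrec.const c)).pair (Primrec.encode.comp Primrec.fst)))
    exact h1.to_comp.to₂
  -- Step 2: enumeration of A without repetitions is unbounded
  have hDsubA : ∀ {n : ℕ} {s : Str}, s ∈ DList HB n → s ∈ A := by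
    intro n s h
    exact (hHBspec s).2 (DList_mem_halts HB h)
  have hunb : ∀ idx : ℕ, ∃ n, idx < (DList HB n).length := by
    intro idx
    obtain ⟨F, hFA, hFcard⟩ := hA.exists_subset_card_eq (idx + 1)
    have hstage : ∀ s ∈ F, ∃ n, s ∈ DList HB n := by
      intro s hs
      obtain ⟨t, ht⟩ := (hHBspec s).1 (hFA hs)
      exact ⟨_, DList_complete HB ht⟩
    choose st hst using hstage
    set N := F.sup fun s => if h : s ∈ F then st s h else 0 with hN
    refine ⟨N, ?_⟩
    have hsub : F ⊆ (DList HB N).toFinset := by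
      intro s hs
      have h1 : st s hs ≤ N := by
        calc st s hs = (if h : s ∈ F then st s h else 0) := by rw [dif_pos hs]
          _ ≤ N := Finset.le_sup (f := fun s => if h : s ∈ F then st s h else 0) hs
      have := (DList_prefix HB h1).subset (hst s hs)
      simpa using this
    have := Finset.card_le_card hsub
    rw [hFcard, List.toFinset_card_of_nodup (DList_nodup HB N)] at this
    omega
  -- Step 3: the machine
  set en : ℕ → Str := nthA HB hunb with hen_def
  have hen : Computable en := computable_nthA HB hunb hHBcomp
  have henA : ∀ idx, en idx ∈ A := fun idx => (hHBspec _).2 (nthA_mem HB hunb idx)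
  have heninj : Function.Injective en := nthA_inj HB hunb
  have hex := winP_exists f l₀ hlim
  set mf : ℕ → ℕ := mfun f l₀ hex with hmf_def
  have hmfc : Computable mf := computable_mfun f l₀ hf hex
  set C : Computer := machine mf en hmfc hen with hC
  obtain ⟨sim, hsim⟩ := U.optimal C
  -- Step 4: choose the block parameter u
  intro B
  obtain ⟨u₀, hu₀⟩ := pow_unbounded_of_one_lt (8 * B) (one_lt_two (α := ℝ))
  set u := max sim u₀ with hu_def
  have hBu : 8 * B < 2 ^ u := by
    calc 8 * B < 2 ^ u₀ := hu₀
      _ ≤ 2 ^ u := by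
        apply pow_le_pow_right₀ one_le_two (le_max_right _ _)
  set m := mf u with hm_def
  have hml₀ : l₀ + 2 ≤ m := mfun_ge f l₀ hex u
  set M := m + (2 * u + 2) with hM_def
  have hfM : 8 ^ u ≤ f M := mfun_win f l₀ hex u (le_refl _)
  -- Step 5: the finite set F
  set F : Finset Str :=
    (Finset.range (2 ^ m)).image (fun n => en (Encodable.encode (natToStr m n))) with hF_def
  refine ⟨F, ?_⟩
  -- every element of F has a short U-program
  have hKc : ∀ s ∈ F, (Kc U s ≤ M ∧ ∃ p : Str, p.length = Kc U s ∧ s ∈ U.toComputer.f p) := by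
    intro s hs
    obtain ⟨n, _, rfl⟩ := Finset.mem_image.1 hs
    have hq : (natToStr m n).length = mf u := natToStr_length m n
    have hmem : en (Encodable.encode (natToStr m n)) ∈ C.f (prog u (natToStr m n)) :=
      machine_mem mf en hq
    obtain ⟨p', hp', hlen⟩ := hsim _ _ hmem
    have hKle : Kc U (en (Encodable.encode (natToStr m n))) ≤ p'.length :=
      Nat.sInf_le ⟨p', rfl, hp'⟩
    have hne : Kc U (en (Encodable.encode (natToStr m n))) ∈
        {k | ∃ p : Str, p.length = k ∧ en (Encodable.encode (natToStr m n)) ∈ U.toComputer.f p} :=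
      Nat.sInf_mem ⟨p'.length, p', rfl, hp'⟩
    constructor
    · refine le_trans hKle (le_trans hlen ?_)
      rw [prog_length, natToStr_length]
      have : sim ≤ u := le_max_left _ _
      omega
    · exact hne
  have hFA : ∀ s ∈ F, s ∈ A := by
    intro s hs
    obtain ⟨n, _, rfl⟩ := Finset.mem_image.1 hs
    exact henA _
  -- cardinalities
  have hcardF : F.card = 2 ^ m := by
    rw [hF_def, Finset.card_image_of_injOn, Finset.card_range]
    intro a ha b hb hab
    simp only [Finset.coe_range, Set.mem_Iio] at ha hb
    exact natToStr_inj m a b ha hb (Encodable.encode_injective (heninj hab))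
  set F₁ := F.filter (fun s => l₀ ≤ Kc U s) with hF₁
  set F₂ := F.filter (fun s => ¬ l₀ ≤ Kc U s) with hF₂
  have hcard12 : F₁.card + F₂.card = 2 ^ m := by
    rw [hF₁, hF₂, Finset.card_filter_add_card_filter_not, hcardF]
  have hcardF₂ : F₂.card ≤ 2 ^ l₀ := by
    have hinj : ∀ s ∈ F₂, ∃ p : Str, p.length = Kc U s ∧ s ∈ U.toComputer.f p := by
      intro s hs
      exact (hKc s (Finset.mem_filter.1 hs).1).2
    choose ps hps1 hps2 using hinj
    have hle : F₂.card ≤ (Finset.range (2 ^ l₀)).card := by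
      apply Finset.card_le_card_of_injOn
        (fun s => if h : s ∈ F₂ then strVal (ps s h) else 0)
      · intro s hs
        simp only [Finset.mem_coe] at hs ⊢; rw [dif_pos hs]
        simp only [Finset.mem_range]
        have hKlt : Kc U s < l₀ := by
          have := (Finset.mem_filter.1 hs).2
          omega
        calc strVal (ps s hs) < 2 ^ ((ps s hs).length + 1) := strVal_lt _
          _ ≤ 2 ^ l₀ := by
            apply Nat.pow_le_pow_right (by norm_num)
            rw [hps1 s hs]
            omega
      · intro s hs t ht hst
        dsimp only at hst
        rw [dif_pos (Finset.mem_coe.1 hs), dif_pos (Finset.mem_coe.1 ht)] at hst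
        have := strVal_inj hst
        have h1 := hps2 s hs
        have h2 := hps2 t ht
        rw [this] at h1
        exact Part.mem_unique h1 h2
    simpa using hle
  have hcardF₁ : 2 ^ m - 2 ^ l₀ ≤ F₁.card := by omega
  -- the sum bound
  set v : Str → ℝ := fun s => (f (Kc U s) : ℝ) * 2 ^ (-(Kc U s : ℤ)) with hv
  have hv0 : ∀ s, 0 ≤ v s := by
    intro s
    apply mul_nonneg (Nat.cast_nonneg _)
    positivity
  have hsum1 : ∑ s ∈ F, A.indicator v s = ∑ s ∈ F, v s := by
    apply Finset.sum_congr rfl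
    intro s hs
    exact Set.indicator_of_mem (hFA s hs) v
  have hterm : ∀ s ∈ F₁, (f M : ℝ) * 2 ^ (-(M : ℤ)) ≤ v s := by
    intro s hs
    obtain ⟨hsF, hsl₀⟩ := Finset.mem_filter.1 hs
    exact hmono (Kc U s) M hsl₀ (hKc s hsF).1
  have hsum2 : (F₁.card : ℝ) * ((f M : ℝ) * 2 ^ (-(M : ℤ))) ≤ ∑ s ∈ F₁, v s := by
    calc (F₁.card : ℝ) * ((f M : ℝ) * 2 ^ (-(M : ℤ)))
        = ∑ _s ∈ F₁, (f M : ℝ) * 2 ^ (-(M : ℤ)) := by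
          rw [Finset.sum_const, nsmul_eq_mul]
      _ ≤ ∑ s ∈ F₁, v s := Finset.sum_le_sum hterm
  have hsum3 : ∑ s ∈ F₁, v s ≤ ∑ s ∈ F, v s := by
    apply Finset.sum_le_sum_of_subset_of_nonneg (Finset.filter_subset _ _)
    intro i _ _
    exact hv0 i
  -- numeric estimate
  have hpos : (0 : ℝ) < 2 ^ (-(M : ℤ)) := by positivity
  have hcard_real : ((2 : ℝ) ^ m - 2 ^ l₀) ≤ (F₁.card : ℝ) := by
    have h1 : ((2 ^ m - 2 ^ l₀ : ℕ) : ℝ) ≤ (F₁.card : ℝ) := Nat.cast_le.2 hcardF₁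
    have h2 : (2 : ℕ) ^ l₀ ≤ 2 ^ m := Nat.pow_le_pow_right (by norm_num) (by omega)
    rw [Nat.cast_sub h2] at h1
    push_cast at h1
    exact h1
  have hfM_real : (8 : ℝ) ^ u ≤ (f M : ℝ) := by
    have : ((8 ^ u : ℕ) : ℝ) ≤ ((f M : ℕ) : ℝ) := Nat.cast_le.2 hfM
    push_cast at this
    exact this
  have h2l₀ : (2 : ℝ) ^ l₀ ≤ 2 ^ m / 4 := by
    have : (2 : ℝ) ^ (l₀ + 2) ≤ 2 ^ m := by
      apply pow_le_pow_right₀ one_le_two (by omega)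
    rw [pow_add] at this
    norm_num at this ⊢
    linarith
  have hM2 : (2 : ℝ) ^ (-(M : ℤ)) = ((2 : ℝ) ^ m * (4 : ℝ) ^ u * 4)⁻¹ := by
    have hMev : (2 : ℝ) ^ M = 2 ^ m * 4 ^ u * 4 := by
      rw [hM_def, pow_add, pow_add, pow_mul]
      norm_num
      ring
    rw [zpow_neg, zpow_natCast, hMev]
  have hkey : B ≤ ((2 : ℝ) ^ m - 2 ^ l₀) * ((f M : ℝ) * 2 ^ (-(M : ℤ))) := by
    have h34 : (2 : ℝ) ^ m / 2 ≤ (2 : ℝ) ^ m - 2 ^ l₀ := by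
      have hp : (0 : ℝ) < 2 ^ m := by positivity
      linarith
    have hfm2 : (0 : ℝ) ≤ (f M : ℝ) * 2 ^ (-(M : ℤ)) := by
      apply mul_nonneg (Nat.cast_nonneg _) (le_of_lt hpos)
    calc B ≤ 2 ^ u / 8 := by linarith
      _ ≤ ((2 : ℝ) ^ m / 2) * ((8 : ℝ) ^ u * ((2 : ℝ) ^ m * (4 : ℝ) ^ u * 4)⁻¹) := by
          have hq : ((2 : ℝ) ^ m / 2) * ((8 : ℝ) ^ u * ((2 : ℝ) ^ m * (4 : ℝ) ^ u * 4)⁻¹)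
              = 2 ^ u / 8 := by
            have h8 : (8 : ℝ) ^ u = 2 ^ u * 4 ^ u := by
              rw [show (8 : ℝ) = 2 * 4 by norm_num, mul_pow]
            field_simp [h8]
            rw [h8]; ring
          rw [hq]
      _ ≤ ((2 : ℝ) ^ m / 2) * ((f M : ℝ) * 2 ^ (-(M : ℤ))) := by
          apply mul_le_mul_of_nonneg_left _ (by positivity)
          rw [hM2]
          apply mul_le_mul_of_nonneg_right hfM_real (by positivity)
      _ ≤ ((2 : ℝ) ^ m - 2 ^ l₀) * ((f M : ℝ) * 2 ^ (-(M : ℤ))) :=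
          mul_le_mul_of_nonneg_right h34 hfm2
  -- conclude
  rw [hsum1]
  calc B ≤ ((2 : ℝ) ^ m - 2 ^ l₀) * ((f M : ℝ) * 2 ^ (-(M : ℤ))) := hkey
    _ ≤ (F₁.card : ℝ) * ((f M : ℝ) * 2 ^ (-(M : ℤ))) := by
        apply mul_le_mul_of_nonneg_right hcard_real
        apply mul_nonneg (Nat.cast_nonneg _) (le_of_lt hpos)
    _ ≤ ∑ s ∈ F₁, v s := hsum2
    _ ≤ ∑ s ∈ F, v s := hsum3

end Paper
end

section
/- Let m be a universal probability and 0 < q < 1. Then ∑_{s∈{0,1}*} m(s)^q diverges to infinity. -/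
open Filter Topology

namespace Paper

/-! ### Auxiliary machinery for the divergence theorem -/

/-- Auxiliary dyadic rational `2⁻ʲ`. -/
def qv (j : ℕ) : ℚ :=
  ⟨1, 2 ^ j, pow_ne_zero j two_ne_zero, by simpa using Nat.coprime_one_left (2 ^ j)⟩

lemma qv_num (j : ℕ) : (qv j).num = 1 := rfl

lemma qv_den (j : ℕ) : (qv j).den = 2 ^ j := rfl

lemma qv_cast (j : ℕ) : ((qv j : ℚ) : ℝ) = ((2 : ℝ) ^ j)⁻¹ := by
  rw [Rat.cast_def, qv_num, qv_den]
  push_cast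
  simp [one_div]

lemma qv_nonneg (j : ℕ) : 0 ≤ qv j := by
  rw [← Rat.num_nonneg, qv_num]; norm_num

/-- The exponent function. -/
def ef (k : ℕ) (n : ℕ) : ℕ := n + n / k + (k + 1)

/-- The auxiliary lower-computable semi-measure. -/
noncomputable def rfun (k : ℕ) : Str → ℝ := fun s => ((2 : ℝ) ^ ef k s.length)⁻¹

/-! #### Computability of `qv` -/

noncomputable def oldenc : ℚ → ℕ := @Encodable.encode ℚ Rat.instEncodable

lemma oldenc_eq (q : ℚ) : oldenc q = Nat.pair (Encodable.encode q.num) q.den := rfl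

lemma oldenc_qv (j : ℕ) : oldenc (qv j) = Nat.pair 2 (2 ^ j) := rfl

lemma int_encode_natAbs (z : ℤ) :
    (Encodable.encode z) / 2 + (Encodable.encode z) % 2 = z.natAbs := by
  rcases z with n | n
  · show ((2 * n) / 2 + (2 * n) % 2 = n)
    omega
  · show ((2 * n + 1) / 2 + (2 * n + 1) % 2 = n + 1)
    omega

lemma encode_ofNat_int (a : ℕ) : Encodable.encode (Denumerable.ofNat ℤ a) = a :=
  Denumerable.encode_ofNat a

lemma natAbs_ofNat_int (a : ℕ) : (Denumerable.ofNat ℤ a).natAbs = a / 2 + a % 2 := by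
  have := int_encode_natAbs (Denumerable.ofNat ℤ a)
  rw [encode_ofNat_int] at this
  exact this.symm

def validP (y : ℕ) : Prop :=
  0 < y.unpair.2 ∧ Nat.gcd (y.unpair.1 / 2 + y.unpair.1 % 2) y.unpair.2 = 1

instance : DecidablePred validP := fun _ => instDecidableAnd

lemma valid_iff (y : ℕ) : y ∈ Set.range oldenc ↔ validP y := by
  constructor
  · rintro ⟨q, rfl⟩
    rw [oldenc_eq]
    constructor
    · simpa [Nat.unpair_pair] using q.pos
    · rw [Nat.unpair_pair]
      simpa [int_encode_natAbs] using q.reduced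
  · rintro ⟨h1, h2⟩
    refine ⟨⟨Denumerable.ofNat ℤ y.unpair.1, y.unpair.2, h1.ne', ?_⟩, ?_⟩
    · rw [natAbs_ofNat_int]; exact h2
    · rw [oldenc_eq]
      show Nat.pair (Encodable.encode (Denumerable.ofNat ℤ y.unpair.1)) y.unpair.2 = y
      rw [encode_ofNat_int, Nat.pair_unpair]

def gstep (p : ℕ × ℕ) : ℕ × ℕ := if p.1 = 0 then p else (p.2 % p.1, p.1)

lemma gstep_iterate : ∀ k a b, a < k → gstep^[k] (a, b) = (0, Nat.gcd a b) := by
  intro k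
  induction k using Nat.strong_induction_on with
  | _ k ih =>
    intro a b hak
    rcases Nat.eq_zero_or_pos a with rfl | ha
    · have : gstep (0, b) = (0, b) := by simp [gstep]
      rw [Function.iterate_fixed this, Nat.gcd_zero_left]
    · obtain ⟨k', rfl⟩ : ∃ k', k = k' + 1 := ⟨k - 1, by omega⟩
      rw [Function.iterate_succ_apply]
      have hs : gstep (a, b) = (b % a, a) := by simp [gstep, ha.ne']
      rw [hs, ih k' (by omega) _ _ (lt_of_lt_of_le (Nat.mod_lt b ha) (by omega)),
        ← Nat.gcd_rec]

lemma primrec₂_gcd : Primrec₂ Nat.gcd := by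
  have hstep : Primrec gstep := by
    unfold gstep
    exact Primrec.ite (Primrec.eq.comp Primrec.fst (Primrec.const 0)) Primrec.id
      (Primrec.pair (Primrec.nat_mod.comp Primrec.snd Primrec.fst) Primrec.fst)
  have hit : Primrec (fun p : ℕ × ℕ => (fun q => gstep q)^[p.1 + 1] (id p)) :=
    Primrec.nat_iterate (Primrec.succ.comp Primrec.fst) Primrec.id
      (hstep.comp Primrec.snd).to₂
  refine Primrec₂.mk ?_
  have : Primrec (fun p : ℕ × ℕ => ((fun q => gstep q)^[p.1 + 1] (id p)).2) :=
    Primrec.snd.comp hit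
  refine this.of_eq fun p => ?_
  rw [id, show (fun q => gstep q) = gstep from rfl,
    gstep_iterate (p.1 + 1) p.1 p.2 (Nat.lt_succ_self _)]

lemma primrecPred_valid : PrimrecPred validP := by
  unfold validP
  apply PrimrecPred.and
  · exact Primrec.nat_lt.comp (Primrec.const 0) (Primrec.snd.comp Primrec.unpair)
  · apply Primrec.eq.comp _ (Primrec.const 1)
    exact primrec₂_gcd.comp
      (Primrec.nat_add.comp
        (Primrec.nat_div.comp (Primrec.fst.comp Primrec.unpair) (Primrec.const 2))
        (Primrec.nat_mod.comp (Primrec.fst.comp Primrec.unpair) (Primrec.const 2)))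
      (Primrec.snd.comp Primrec.unpair)

def cnt : ℕ → ℕ := fun N => Nat.rec 0 (fun n acc => acc + if validP n then 1 else 0) N

lemma primrec_cnt : Primrec cnt := by
  unfold cnt
  apply Primrec.nat_rec₁
  exact (Primrec.nat_add.comp Primrec.snd
    (Primrec.ite (primrecPred_valid.comp Primrec.fst) (Primrec.const 1)
      (Primrec.const 0))).to₂

lemma countP_range (N : ℕ) :
    (List.range N).countP (fun y => decide (validP y)) = cnt N := by
  induction N with
  | zero => rfl
  | succ n ih =>
    rw [List.range_succ, List.countP_append, ih]
    show cnt n + _ = cnt n + _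
    by_cases h : validP n <;> simp [h, List.countP_cons]

lemma new_encode_eq (q : ℚ) :
    @Encodable.encode ℚ Primcodable.toEncodable q = cnt (oldenc q) := by
  have h0 : @Encodable.encode ℚ Primcodable.toEncodable q =
      (List.range (oldenc q)).countP
        (fun y => @decide (y ∈ Set.range oldenc)
          (@Encodable.decidableRangeEncode ℚ Rat.instEncodable y)) := rfl
  rw [h0, ← countP_range]
  apply List.countP_congr
  intro y _
  exact ⟨fun h => decide_eq_true ((valid_iff y).1
      (@of_decide_eq_true _ (@Encodable.decidableRangeEncode ℚ Rat.instEncodable y) h)),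
    fun h => @decide_eq_true _ (@Encodable.decidableRangeEncode ℚ Rat.instEncodable y)
      ((valid_iff y).2 (of_decide_eq_true h))⟩

lemma computable_qv (k : ℕ) :
    Computable₂ (fun (_ : ℕ) (s : Str) => qv (ef k s.length)) := by
  have p2 : Primrec₂ (fun a b : ℕ => a ^ b) := Primrec₂.unpaired'.mp Nat.Primrec.pow
  have he : Primrec (fun s : Str => ef k s.length) := by
    unfold ef
    exact Primrec.nat_add.comp
      (Primrec.nat_add.comp Primrec.list_length
        (Primrec.nat_div.comp Primrec.list_length (Primrec.const k)))
      (Primrec.const (k + 1))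
  have h : Primrec (fun s : Str => qv (ef k s.length)) := by
    rw [← Primrec.encode_iff]
    have : Primrec (fun s : Str => cnt (Nat.pair 2 (2 ^ ef k s.length))) :=
      primrec_cnt.comp (Primrec₂.natPair.comp (Primrec.const 2)
        (p2.comp (Primrec.const 2) he))
    refine this.of_eq fun s => ?_
    rw [new_encode_eq, oldenc_qv]
  exact (h.comp Primrec.snd).to_comp

/-! #### `rfun` is a lower-computable semi-measure -/

lemma card_filter_length_le (F : Finset Str) (n : ℕ) :
    (F.filter (fun s => s.length = n)).card ≤ 2 ^ n := by
  classical
  have hsub : F.filter (fun s => s.length = n) ⊆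
      (Finset.univ : Finset (List.Vector Bool n)).image List.Vector.toList := by
    intro s hs
    rcases Finset.mem_filter.mp hs with ⟨_, h⟩
    exact Finset.mem_image.mpr ⟨(⟨s, h⟩ : List.Vector Bool n), Finset.mem_univ _, rfl⟩
  calc (F.filter (fun s => s.length = n)).card
      ≤ ((Finset.univ : Finset (List.Vector Bool n)).image List.Vector.toList).card :=
        Finset.card_le_card hsub
    _ ≤ (Finset.univ : Finset (List.Vector Bool n)).card := Finset.card_image_le
    _ = 2 ^ n := by rw [Finset.card_univ, card_vector]; simp

lemma rfun_sum_le (k : ℕ) (hk : 0 < k) (F : Finset Str) : ∑ s ∈ F, rfun k s ≤ 1 := by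
  classical
  set N := F.sup List.length with hN
  have hmap : ∀ s ∈ F, s.length ∈ Finset.range (N + 1) := fun s hs =>
    Finset.mem_range.mpr (Nat.lt_succ_of_le (Finset.le_sup hs))
  rw [← Finset.sum_fiberwise_of_maps_to hmap]
  have step1 : ∀ n ∈ Finset.range (N + 1),
      ∑ s ∈ F.filter (fun s => s.length = n), rfun k s
        ≤ (2 : ℝ) ^ n * ((2 : ℝ) ^ ef k n)⁻¹ := by
    intro n _
    have hc : ∀ s ∈ F.filter (fun s => s.length = n),
        rfun k s = ((2 : ℝ) ^ ef k n)⁻¹ := by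
      intro s hs
      rcases Finset.mem_filter.mp hs with ⟨_, h⟩
      simp [rfun, h]
    rw [Finset.sum_congr rfl hc, Finset.sum_const, nsmul_eq_mul]
    have hcard : ((F.filter (fun s => s.length = n)).card : ℝ) ≤ (2 : ℝ) ^ n := by
      exact_mod_cast card_filter_length_le F n
    exact mul_le_mul_of_nonneg_right hcard (by positivity)
  have step2 : ∀ n : ℕ, (2 : ℝ) ^ n * ((2 : ℝ) ^ ef k n)⁻¹
      = ((2 : ℝ) ^ (n / k + (k + 1)))⁻¹ := by
    intro n
    unfold ef
    rw [add_assoc, pow_add, mul_inv, ← mul_assoc,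
      mul_inv_cancel₀ (by positivity), one_mul]
  calc ∑ n ∈ Finset.range (N + 1), ∑ s ∈ F.filter (fun s => s.length = n), rfun k s
      ≤ ∑ n ∈ Finset.range (N + 1), (2 : ℝ) ^ n * ((2 : ℝ) ^ ef k n)⁻¹ :=
        Finset.sum_le_sum step1
    _ = ∑ n ∈ Finset.range (N + 1), ((2 : ℝ) ^ (n / k + (k + 1)))⁻¹ := by
        exact Finset.sum_congr rfl fun n _ => step2 n
    _ ≤ 1 := by
        have hmap2 : ∀ n ∈ Finset.range (N + 1), n / k ∈ Finset.range (N + 1) :=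
          fun n hn => Finset.mem_range.mpr
            (lt_of_le_of_lt (Nat.div_le_self n k) (Finset.mem_range.mp hn))
        rw [← Finset.sum_fiberwise_of_maps_to hmap2]
        have inner : ∀ j ∈ Finset.range (N + 1),
            ∑ n ∈ (Finset.range (N + 1)).filter (fun n => n / k = j),
              ((2 : ℝ) ^ (n / k + (k + 1)))⁻¹
              ≤ (k : ℝ) * ((2 : ℝ) ^ (j + (k + 1)))⁻¹ := by
          intro j _
          have hval : ∀ n ∈ (Finset.range (N + 1)).filter (fun n => n / k = j),
              ((2 : ℝ) ^ (n / k + (k + 1)))⁻¹ = ((2 : ℝ) ^ (j + (k + 1)))⁻¹ := by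
            intro n hn
            rcases Finset.mem_filter.mp hn with ⟨_, h⟩
            rw [show n / k = j from h]
          rw [Finset.sum_congr rfl hval, Finset.sum_const, nsmul_eq_mul]
          have hsub : (Finset.range (N + 1)).filter (fun n => n / k = j)
              ⊆ Finset.Ico (j * k) (j * k + k) := by
            intro n hn
            rcases Finset.mem_filter.mp hn with ⟨_, h⟩
            have h' : n / k = j := h
            rw [Finset.mem_Ico]
            constructor
            · rw [← h']
              exact Nat.div_mul_le_self n k
            · have h1 : n < k * (n / k) + k := by
                conv_lhs => rw [← Nat.div_add_mod n k]
                exact Nat.add_lt_add_left (Nat.mod_lt n hk) _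
              calc n < k * (n / k) + k := h1
                _ = j * k + k := by rw [h', mul_comm]
          have hcard : ((Finset.range (N + 1)).filter (fun n => n / k = j)).card ≤ k := by
            have := Finset.card_le_card hsub
            simpa [Nat.card_Ico] using this
          exact mul_le_mul_of_nonneg_right (by exact_mod_cast hcard) (by positivity)
        calc ∑ j ∈ Finset.range (N + 1),
              ∑ n ∈ (Finset.range (N + 1)).filter (fun n => n / k = j),
                ((2 : ℝ) ^ (n / k + (k + 1)))⁻¹
            ≤ ∑ j ∈ Finset.range (N + 1), (k : ℝ) * ((2 : ℝ) ^ (j + (k + 1)))⁻¹ :=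
              Finset.sum_le_sum inner
          _ = (k : ℝ) * ((2 : ℝ) ^ (k + 1))⁻¹ *
                ∑ j ∈ Finset.range (N + 1), ((1 : ℝ) / 2) ^ j := by
              rw [Finset.mul_sum]
              refine Finset.sum_congr rfl fun j _ => ?_
              rw [pow_add, mul_inv, one_div, inv_pow]
              ring
          _ ≤ (k : ℝ) * ((2 : ℝ) ^ (k + 1))⁻¹ * 2 := by
              apply mul_le_mul_of_nonneg_left (sum_geometric_two_le _) (by positivity)
          _ ≤ 1 := by
              have hk2 : (k : ℝ) ≤ 2 ^ k := by exact_mod_cast (Nat.lt_two_pow_self (n := k)).le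
              have h2k : (0 : ℝ) < 2 ^ k := by positivity
              have heq : (k : ℝ) * ((2 : ℝ) ^ (k + 1))⁻¹ * 2 = (k : ℝ) / 2 ^ k := by
                rw [pow_succ]
                field_simp
              rw [heq, div_le_one h2k]
              exact hk2

lemma rfun_lcsm (k : ℕ) (hk : 0 < k) : LCSemiMeasure (rfun k) := by
  constructor
  · constructor
    · intro s
      constructor
      · unfold rfun; positivity
      · unfold rfun
        exact inv_le_one_of_one_le₀ (one_le_pow₀ (by norm_num))
    · exact rfun_sum_le k hk
  · refine ⟨fun _ s => qv (ef k s.length), computable_qv k,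
      fun s => ⟨fun n => ⟨qv_nonneg _, ?_⟩, ?_⟩⟩
    · rw [qv_cast]
      unfold rfun
      exact le_rfl
    · have hr : rfun k s = ((qv (ef k s.length) : ℚ) : ℝ) := by
        unfold rfun
        rw [qv_cast]
      rw [hr]
      exact tendsto_const_nhds

/-- For a universal probability `m` and `0 < q < 1`, the power sum `∑ s, m s ^ q`
diverges to infinity. -/
theorem power_sum_diverges_of_lt_one (m : Str → ℝ) (hm : UniversalProb m)
    (q : ℝ) (h0 : 0 < q) (h1 : q < 1) :
    ∀ B : ℝ, ∃ F : Finset Str, B ≤ ∑ s ∈ F, m s ^ q := by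
  intro B
  classical
  have hq1 : (0 : ℝ) < 1 - q := by linarith
  obtain ⟨k, hkge⟩ : ∃ k : ℕ, 2 / (1 - q) ≤ (k : ℝ) := exists_nat_ge _
  have hkpos : 0 < k := by
    by_contra h
    push_neg at h
    interval_cases k
    simp only [Nat.cast_zero] at hkge
    have : (0 : ℝ) < 2 / (1 - q) := by positivity
    linarith
  set ε : ℝ := (1 - q) / 2 with hε
  have hεpos : 0 < ε := by positivity
  have hkinv : (1 : ℝ) / k ≤ ε := by
    rw [div_le_iff₀ (by exact_mod_cast hkpos)]
    rw [div_le_iff₀ hq1] at hkge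
    rw [hε]
    nlinarith [hkge]
  obtain ⟨c, hc, hdom⟩ := hm.2 (rfun k) (rfun_lcsm k hkpos)
  have key : ∀ n : ℕ, ∀ s : Str, s.length = n →
      c ^ q * ((2 : ℝ) ^ ef k n)⁻¹ ^ q ≤ m s ^ q := by
    intro n s hs
    have hr0 : 0 ≤ rfun k s := by unfold rfun; positivity
    have h1' : (c * rfun k s) ^ q ≤ m s ^ q :=
      Real.rpow_le_rpow (by positivity) (hdom s) h0.le
    rw [Real.mul_rpow hc.le hr0] at h1'
    have hr : rfun k s = ((2 : ℝ) ^ ef k n)⁻¹ := by unfold rfun; rw [hs]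
    rwa [hr] at h1'
  have base1 : (1 : ℝ) < (2 : ℝ) ^ ε :=
    Real.one_lt_rpow_iff_of_pos (by norm_num) |>.mpr (Or.inl ⟨by norm_num, hεpos⟩)
  set A : ℝ := c ^ q * ((2 : ℝ) ^ (-((k : ℝ) + 1))) with hA
  have hApos : 0 < A :=
    mul_pos (Real.rpow_pos_of_pos hc q) (Real.rpow_pos_of_pos (by norm_num) _)
  obtain ⟨n, hn⟩ : ∃ n : ℕ, B / A ≤ ((2 : ℝ) ^ ε) ^ n :=
    ((tendsto_pow_atTop_atTop_of_one_lt base1).eventually_ge_atTop (B / A)).exists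
  refine ⟨(Finset.univ : Finset (List.Vector Bool n)).image List.Vector.toList, ?_⟩
  have hcard : ((Finset.univ : Finset (List.Vector Bool n)).image
      List.Vector.toList).card = 2 ^ n := by
    rw [Finset.card_image_of_injective _
      (fun a b hab => List.Vector.toList_injective hab), Finset.card_univ, card_vector]
    simp
  have hlen : ∀ s ∈ (Finset.univ : Finset (List.Vector Bool n)).image
      List.Vector.toList, s.length = n := by
    intro s hs
    rcases Finset.mem_image.mp hs with ⟨v, _, rfl⟩
    exact v.toList_length
  have hsum : ((2 : ℝ) ^ n) * (c ^ q * ((2 : ℝ) ^ ef k n)⁻¹ ^ q)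
      ≤ ∑ s ∈ (Finset.univ : Finset (List.Vector Bool n)).image
          List.Vector.toList, m s ^ q := by
    have h := Finset.card_nsmul_le_sum
      ((Finset.univ : Finset (List.Vector Bool n)).image List.Vector.toList)
      (fun s => m s ^ q) (c ^ q * ((2 : ℝ) ^ ef k n)⁻¹ ^ q)
      (fun s hs => key n s (hlen s hs))
    rw [hcard, nsmul_eq_mul] at h
    simpa using h
  refine le_trans ?_ hsum
  have hE : ((ef k n : ℕ) : ℝ) = (n : ℝ) + ((n / k : ℕ) : ℝ) + ((k : ℝ) + 1) := by
    unfold ef; push_cast; ring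
  have hpow : ((2 : ℝ) ^ n) * (c ^ q * ((2 : ℝ) ^ ef k n)⁻¹ ^ q)
      = c ^ q * (2 : ℝ) ^ ((n : ℝ) - q * ((ef k n : ℕ) : ℝ)) := by
    have h2E : (0 : ℝ) < (2 : ℝ) ^ ef k n := by positivity
    rw [Real.inv_rpow h2E.le, ← Real.rpow_neg h2E.le]
    rw [show ((2:ℝ) ^ ef k n) = (2:ℝ) ^ ((ef k n : ℕ) : ℝ) from (Real.rpow_natCast 2 _).symm]
    rw [← Real.rpow_mul (by norm_num : (0:ℝ) ≤ 2)]
    rw [show ((2:ℝ) ^ n) = (2:ℝ) ^ ((n : ℕ) : ℝ) from (Real.rpow_natCast 2 _).symm]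
    rw [← mul_assoc, mul_comm ((2:ℝ) ^ ((n : ℕ) : ℝ)) (c ^ q), mul_assoc,
      ← Real.rpow_add (by norm_num : (0:ℝ) < 2)]
    ring_nf
  rw [hpow]
  have hexp : ε * n - ((k : ℝ) + 1) ≤ (n : ℝ) - q * ((ef k n : ℕ) : ℝ) := by
    rw [hE]
    have hx : ((n / k : ℕ) : ℝ) ≤ (n : ℝ) / (k : ℝ) := Nat.cast_div_le
    have hdiv : (n : ℝ) / (k : ℝ) ≤ ε * n := by
      rw [div_eq_mul_inv]
      calc (n : ℝ) * (k : ℝ)⁻¹ ≤ (n : ℝ) * ε := by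
            apply mul_le_mul_of_nonneg_left _ (Nat.cast_nonneg n)
            rwa [one_div] at hkinv
        _ = ε * n := mul_comm _ _
    have hx0 : (0 : ℝ) ≤ ((n / k : ℕ) : ℝ) := Nat.cast_nonneg _
    have h1' : q * ((n / k : ℕ) : ℝ) ≤ ε * n := by
      calc q * ((n / k : ℕ) : ℝ) ≤ 1 * ((n / k : ℕ) : ℝ) :=
            mul_le_mul_of_nonneg_right h1.le hx0
        _ = ((n / k : ℕ) : ℝ) := one_mul _
        _ ≤ (n : ℝ) / (k : ℝ) := hx
        _ ≤ ε * n := hdiv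
    have h2' : q * ((k : ℝ) + 1) ≤ (k : ℝ) + 1 := by
      have hknn : (0 : ℝ) ≤ (k : ℝ) + 1 := by positivity
      nlinarith
    have hqn : q * (n : ℝ) + 2 * ε * (n : ℝ) = (n : ℝ) := by
      rw [hε]; ring
    nlinarith [Nat.cast_nonneg (α := ℝ) n]
  have hmono : (2 : ℝ) ^ (ε * n - ((k : ℝ) + 1))
      ≤ (2 : ℝ) ^ ((n : ℝ) - q * ((ef k n : ℕ) : ℝ)) :=
    Real.rpow_le_rpow_of_exponent_le (by norm_num) hexp
  have hBA : B ≤ A * ((2 : ℝ) ^ ε) ^ n := by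
    rw [div_le_iff₀ hApos] at hn
    calc B ≤ ((2 : ℝ) ^ ε) ^ n * A := hn
      _ = A * ((2 : ℝ) ^ ε) ^ n := mul_comm _ _
  calc B ≤ A * ((2 : ℝ) ^ ε) ^ n := hBA
    _ = c ^ q * (2 : ℝ) ^ (ε * n - ((k : ℝ) + 1)) := by
        rw [hA]
        rw [show (((2:ℝ) ^ ε) ^ n) = ((2:ℝ) ^ ε) ^ ((n : ℕ) : ℝ) from
          (Real.rpow_natCast _ _).symm]
        rw [← Real.rpow_mul (by norm_num : (0:ℝ) ≤ 2)]
        rw [mul_assoc, ← Real.rpow_add (by norm_num : (0:ℝ) < 2)]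
        ring_nf
    _ ≤ c ^ q * (2 : ℝ) ^ ((n : ℝ) - q * ((ef k n : ℕ) : ℝ)) :=
        mul_le_mul_of_nonneg_left hmono (Real.rpow_pos_of_pos hc q).le

end Paper
end
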